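/- Let L be a bounded chain and G a finite MH-homogeneous L-colored graph. If x, y, z are three distinct vertices of G with χ(x,z) ≻ 0 and χ(y,z) ≻ 0, then χ(x,y) ≺ χ(x,z) if and only if χ(y) ≻ χ(z). -/

import Mathlib

/-- An `L`-colored graph on vertex set `V`: vertex colors and symmetric,
irreflexive edge colors (color `⊥` means "no edge"). -/
structure LGraph (L : Type*) [PartialOrder L] [BoundedOrder L] (V : Type*) where
  vcol : V → L
  ecol : V → V → L
  ecol_irrefl : ∀ x, ecol x x = ⊥
  ecol_symm : ∀ x y, ecol x y = ecol y x

variable {L V : Type*} [PartialOrder L] [BoundedOrder L]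

/-- An endomorphism of an `L`-colored graph weakly increases all colors. -/
def LGraph.IsEndo (G : LGraph L V) (f : V → V) : Prop :=
  (∀ x, G.vcol x ≤ G.vcol (f x)) ∧ (∀ x y, G.ecol x y ≤ G.ecol (f x) (f y))

/-- A homomorphism from the finite induced substructure on `S` into `G`. -/
def LGraph.IsPartialHom (G : LGraph L V) (S : Set V) (f : V → V) : Prop :=
  (∀ x ∈ S, G.vcol x ≤ G.vcol (f x)) ∧
  (∀ x ∈ S, ∀ y ∈ S, G.ecol x y ≤ G.ecol (f x) (f y))

/-- `G` is MH-homogeneous: every monomorphism between finite induced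
substructures extends to an endomorphism. -/
def LGraph.MH (G : LGraph L V) : Prop :=
  ∀ S : Set V, S.Finite → ∀ f : V → V, Set.InjOn f S → G.IsPartialHom S f →
    ∃ g : V → V, G.IsEndo g ∧ ∀ x ∈ S, g x = f x

/-- `G` is HH-homogeneous: every homomorphism between finite induced
substructures extends to an endomorphism. -/
def LGraph.HH (G : LGraph L V) : Prop :=
  ∀ S : Set V, S.Finite → ∀ f : V → V, G.IsPartialHom S f →
    ∃ g : V → V, G.IsEndo g ∧ ∀ x ∈ S, g x = f x

/-- Adjacency: edge color is nonzero. -/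
def LGraph.Adj (G : LGraph L V) (x y : V) : Prop := G.ecol x y ≠ ⊥

/-- Two vertices are connected if joined by a path of edges of nonzero color. -/
def LGraph.Conn (G : LGraph L V) (x y : V) : Prop := Relation.ReflTransGen G.Adj x y

/-- `S` is a connected component of `G`. -/
def LGraph.IsComponent (G : LGraph L V) (S : Set V) : Prop :=
  ∃ x : V, S = {y | G.Conn x y}

/-- All vertices of `G` have the same color. -/
def LGraph.VertexUniform (G : LGraph L V) : Prop := ∃ α : L, ∀ x, G.vcol x = α

/-- `G` restricted to `S` is a uniform `L`-colored graph: all vertices of one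
color and all edges between distinct vertices of one fixed nonzero color. -/
def LGraph.UniformOn (G : LGraph L V) (S : Set V) : Prop :=
  (∃ α : L, ∀ x ∈ S, G.vcol x = α) ∧
  (∃ β : L, ⊥ < β ∧ ∀ x ∈ S, ∀ y ∈ S, x ≠ y → G.ecol x y = β)

/-- `G[S]` is isomorphic to `U(n, α, β)`, the connected uniform graph on `n`
vertices, all colored `α`, with all edges colored `β ≻ ⊥`. -/
def LGraph.IsU (G : LGraph L V) (S : Set V) (n : ℕ) (α β : L) : Prop :=
  S.ncard = n ∧ (∀ x ∈ S, G.vcol x = α) ∧ ⊥ < β ∧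
  (∀ x ∈ S, ∀ y ∈ S, x ≠ y → G.ecol x y = β)

/-- `L` is a diamond: all elements other than `⊥` and `⊤` are pairwise
incomparable. -/
def IsDiamond (L : Type*) [PartialOrder L] [BoundedOrder L] : Prop :=
  ∀ a b : L, a ≠ ⊥ → a ≠ ⊤ → b ≠ ⊥ → b ≠ ⊤ → a ≤ b → a = b

/-- An automorphism of an `L`-colored graph. -/
def LGraph.IsAuto (G : LGraph L V) (f : V → V) : Prop :=
  Function.Bijective f ∧ (∀ x, G.vcol (f x) = G.vcol x) ∧
  (∀ x y, G.ecol (f x) (f y) = G.ecol x y)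

/-- `G` is ultrahomogeneous: every isomorphism between finite induced
substructures extends to an automorphism. -/
def LGraph.Ultra (G : LGraph L V) : Prop :=
  ∀ S : Set V, S.Finite → ∀ f : V → V, Set.InjOn f S →
    (∀ x ∈ S, G.vcol (f x) = G.vcol x) →
    (∀ x ∈ S, ∀ y ∈ S, G.ecol (f x) (f y) = G.ecol x y) →
    ∃ g : V → V, G.IsAuto g ∧ ∀ x ∈ S, g x = f x

section StmtAuxSec

namespace StmtAux

set_option linter.unusedSectionVars false

variable {K W : Type*} [LinearOrder K] [BoundedOrder K] [Finite W]

lemma endo_id (G : LGraph K W) : G.IsEndo id := ⟨fun _ => le_rfl, fun _ _ => le_rfl⟩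

lemma endo_comp (G : LGraph K W) {f g : W → W} (hf : G.IsEndo f) (hg : G.IsEndo g) :
    G.IsEndo (g ∘ f) :=
  ⟨fun x => (hf.1 x).trans (hg.1 (f x)), fun x y => (hf.2 x y).trans (hg.2 (f x) (f y))⟩

lemma endo_iterate (G : LGraph K W) {g : W → W} (hg : G.IsEndo g) (n : ℕ) :
    G.IsEndo (g^[n]) := by
  induction n with
  | zero => exact endo_id G
  | succ n ih => rw [Function.iterate_succ]; exact endo_comp G hg ih

lemma exists_idem_pow (f : W → W) : ∃ M, 0 < M ∧ ∀ v, f^[M] (f^[M] v) = f^[M] v := by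
  obtain ⟨i, j, hne, hij⟩ := Finite.exists_ne_map_eq_of_infinite (fun n : ℕ => f^[n])
  have main : ∀ i j : ℕ, i < j → f^[i] = f^[j] →
      ∃ M, 0 < M ∧ ∀ v, f^[M] (f^[M] v) = f^[M] v := by
    intro i j hlt hij
    set p := j - i with hp
    have hp1 : 0 < p := by omega
    have key : ∀ m : ℕ, f^[i + p + m] = f^[i + m] := by
      intro m
      have h1 : i + p + m = m + (i + p) := by omega
      have h2 : i + p = j := by omega
      have h3 : i + m = m + i := by omega
      rw [h1, h2, Function.iterate_add, h3, Function.iterate_add, ← hij]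
    have per : ∀ k, i ≤ k → f^[k + p] = f^[k] := by
      intro k hk
      have h1 : k + p = i + p + (k - i) := by omega
      have h2 : i + (k - i) = k := by omega
      rw [h1, key, h2]
    have periter : ∀ t k, i ≤ k → f^[k + t * p] = f^[k] := by
      intro t
      induction t with
      | zero => intro k _; simp
      | succ n ih =>
        intro k hk
        have h1 : k + (n + 1) * p = (k + n * p) + p := by ring
        rw [h1, per _ (by omega), ih k hk]
    refine ⟨(i + 1) * p, by positivity, fun v => ?_⟩
    have h1 : f^[(i+1)*p] (f^[(i+1)*p] v) = f^[(i+1)*p + (i+1)*p] v := by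
      rw [Function.iterate_add_apply]
    have h2 : f^[(i+1)*p + (i+1)*p] = f^[(i+1)*p] := periter (i+1) _ (by nlinarith)
    rw [h1, h2]
  rcases hne.lt_or_gt with h | h
  · exact main i j h hij
  · exact main j i h hij.symm

/-- an injective-on-T endomorphism mapping everything into T preserves edge
colors between elements of T. -/
lemma rigid (G : LGraph K W) {T : Set W} {q : W → W} (hq : G.IsEndo q)
    (hrange : ∀ v, q v ∈ T) (hinj : Set.InjOn q T) :
    ∀ a ∈ T, ∀ b ∈ T, G.ecol (q a) (q b) = G.ecol a b := by
  obtain ⟨M, hM0, hMid⟩ := exists_idem_pow q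
  have hiterT : ∀ n v, 0 < n → q^[n] v ∈ T := by
    intro n v hn
    obtain ⟨m, rfl⟩ : ∃ m, n = m + 1 := ⟨n - 1, by omega⟩
    rw [Function.iterate_succ_apply']
    exact hrange _
  have hinjn : ∀ n, Set.InjOn (q^[n]) T := by
    intro n
    induction n with
    | zero => simpa using Set.injOn_id T
    | succ n ih =>
      intro a ha b hb hab
      rw [Function.iterate_succ_apply, Function.iterate_succ_apply] at hab
      exact hinj ha hb (ih (hrange a) (hrange b) hab)
  have hfixM : ∀ a ∈ T, q^[M] a = a := by
    intro a ha
    exact hinjn M (hiterT M a hM0) ha (hMid a)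
  intro a ha b hb
  refine le_antisymm ?_ (hq.2 a b)
  have h1 : G.ecol (q a) (q b) ≤ G.ecol (q^[M-1] (q a)) (q^[M-1] (q b)) :=
    (endo_iterate G hq (M-1)).2 _ _
  have h2 : q^[M-1] (q a) = q^[M] a := by
    rw [← Function.iterate_succ_apply]
    congr 1
    omega
  have h3 : q^[M-1] (q b) = q^[M] b := by
    rw [← Function.iterate_succ_apply]
    congr 1
    omega
  rw [h2, h3, hfixM a ha, hfixM b hb] at h1
  exact h1

/-- minimal pinned retract -/
lemma exists_min_retract (G : LGraph K W) (F : Set W) :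
    ∃ h : W → W, G.IsEndo h ∧ (∀ p ∈ F, h p = p) ∧ (∀ v, h (h v) = h v) ∧
      ∀ q : W → W, G.IsEndo q → (∀ v, q v ∈ Set.range h) → (∀ p ∈ F, q p = p) →
        Set.InjOn q (Set.range h) := by
  classical
  set H : Set (W → W) := {h | G.IsEndo h ∧ (∀ p ∈ F, h p = p) ∧ ∀ v, h (h v) = h v} with hH
  have hid : id ∈ H := ⟨endo_id G, fun _ _ => rfl, fun _ => rfl⟩
  obtain ⟨h, hmem, hmin⟩ := Set.exists_min_image H (fun h => (Set.range h).ncard)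
    (Set.toFinite H) ⟨id, hid⟩
  refine ⟨h, hmem.1, hmem.2.1, hmem.2.2, ?_⟩
  intro q hqE hqT hqF
  by_contra hninj
  rw [Set.InjOn] at hninj
  push_neg at hninj
  obtain ⟨x₁, hx₁, x₂, hx₂, heq, hne⟩ := hninj
  set r := q ∘ h with hr
  have hrE : G.IsEndo r := endo_comp G hmem.1 hqE
  have hrF : ∀ p ∈ F, r p = p := fun p hp => by
    simp only [hr, Function.comp_apply, hmem.2.1 p hp, hqF p hp]
  obtain ⟨M, hM0, hMid⟩ := exists_idem_pow r
  have hmem' : r^[M] ∈ H :=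
    ⟨endo_iterate G hrE M, fun p hp => Function.iterate_fixed (hrF p hp) M, hMid⟩
  have hsub : Set.range (r^[M]) ⊆ q '' (Set.range h) := by
    rintro v ⟨x, rfl⟩
    obtain ⟨m, hm⟩ : ∃ m, M = m + 1 := ⟨M - 1, by omega⟩
    rw [hm, Function.iterate_succ_apply']
    exact ⟨h (r^[m] x), ⟨_, rfl⟩, rfl⟩
  have himg : (q '' (Set.range h)).ncard < (Set.range h).ncard := by
    have h1 : q '' (Set.range h) = q '' (Set.range h \ {x₁}) := by
      apply subset_antisymm
      · rintro _ ⟨v, hv, rfl⟩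
        by_cases hvx : v = x₁
        · exact ⟨x₂, ⟨hx₂, by simp [hne.symm]⟩, by rw [hvx, heq]⟩
        · exact ⟨v, ⟨hv, by simp [hvx]⟩, rfl⟩
      · exact Set.image_mono Set.diff_subset
    rw [h1]
    calc (q '' (Set.range h \ {x₁})).ncard ≤ (Set.range h \ {x₁}).ncard :=
          Set.ncard_image_le (Set.toFinite _)
      _ < (Set.range h).ncard := Set.ncard_diff_singleton_lt_of_mem hx₁ (Set.toFinite _)
  have hge := hmin _ hmem'
  have hle : (Set.range (r^[M])).ncard ≤ (q '' (Set.range h)).ncard :=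
    Set.ncard_le_ncard hsub (Set.toFinite _)
  omega


/-- Extension of a single-point-moving monomorphism into the retract T = range h. -/
lemma ext_single (G : LGraph K W) (hMH : G.MH) {h : W → W}
    (hend : G.IsEndo h) (hidem : ∀ v, h (h v) = h v)
    {S : Set W} {a b : W} (haS : a ∈ S)
    (hST : ∀ s ∈ S, s ≠ a → s ∈ Set.range h) (hbT : b ∈ Set.range h)
    (hbne : ∀ s ∈ S, s ≠ a → b ≠ s)
    (hv : G.vcol a ≤ G.vcol b)
    (he : ∀ s ∈ S, s ≠ a → G.ecol s a ≤ G.ecol s b) :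
    ∃ q : W → W, G.IsEndo q ∧ (∀ v, q v ∈ Set.range h) ∧
      (∀ s ∈ S, s ≠ a → q s = s) ∧ q a = b := by
  classical
  have hfixT : ∀ t ∈ Set.range h, h t = t := by
    rintro t ⟨w, rfl⟩; exact hidem w
  set f : W → W := fun r => if r = a then b else r with hf
  have hfa : f a = b := by simp [hf]
  have hfs : ∀ s, s ≠ a → f s = s := fun s hs => by simp [hf, hs]
  have hinj : Set.InjOn f S := by
    intro s hs t ht hst
    by_cases hsa : s = a <;> by_cases hta : t = a
    · rw [hsa, hta]
    · rw [hsa, hfa, hfs t hta] at hst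
      exact absurd hst (hbne t ht hta)
    · rw [hta, hfa, hfs s hsa] at hst
      exact absurd hst.symm (hbne s hs hsa)
    · rwa [hfs s hsa, hfs t hta] at hst
  have hhom : G.IsPartialHom S f := by
    constructor
    · intro s hs
      by_cases hsa : s = a
      · rw [hsa, hfa]; exact hv
      · rw [hfs s hsa]
    · intro s hs t ht
      by_cases hsa : s = a <;> by_cases hta : t = a
      · rw [hsa, hta, hfa, G.ecol_irrefl]
        exact bot_le
      · rw [hsa, hfa, hfs t hta, G.ecol_symm a t, G.ecol_symm b t]
        exact he t ht hta
      · rw [hta, hfa, hfs s hsa]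
        exact he s hs hsa
      · rw [hfs s hsa, hfs t hta]
  obtain ⟨g₀, hg₀E, hg₀fix⟩ := hMH S (Set.toFinite S) f hinj hhom
  refine ⟨h ∘ g₀, endo_comp G hg₀E hend, fun v => ⟨g₀ v, rfl⟩, ?_, ?_⟩
  · intro s hs hsa
    have : g₀ s = s := by rw [hg₀fix s hs, hfs s hsa]
    simp only [Function.comp_apply, this]
    exact hfixT s (hST s hs hsa)
  · simp only [Function.comp_apply, hg₀fix a haS, hfa]
    exact hfixT b hbT


lemma engineV (G : LGraph K W) (hMH : G.MH) {h : W → W}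
    (hend : G.IsEndo h) (hidem : ∀ v, h (h v) = h v)
    {u v' : W} (hu : h u = u) (hv' : v' ∈ Set.range h)
    (hR : ∀ q : W → W, G.IsEndo q → (∀ v, q v ∈ Set.range h) → q u = u →
      Set.InjOn q (Set.range h))
    (hvlt : G.vcol u < G.vcol v') (hadj : ⊥ < G.ecol u v') : False := by
  classical
  have huT : u ∈ Set.range h := ⟨u, hu⟩
  -- initial mono: u ↦ v'
  obtain ⟨g, hgE, hgT, -, hgu⟩ :=
    ext_single G hMH hend hidem (S := {u}) (a := u) (b := v') rfl
      (fun s hs hsu => absurd hs hsu) hv'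
      (fun s hs hsu => absurd hs hsu) hvlt.le
      (fun s hs hsu => absurd hs hsu)
  set w : ℕ → W := fun k => g^[k] u with hw
  have hw0 : w 0 = u := rfl
  have hw1 : w 1 = v' := hgu
  have hwsucc : ∀ k, w (k+1) = g (w k) := fun k => Function.iterate_succ_apply' g k u
  have hwadd : ∀ m k, w (m + k) = g^[m] (w k) := fun m k => Function.iterate_add_apply g m k u
  have hwT : ∀ k, 1 ≤ k → w k ∈ Set.range h := by
    intro k hk
    obtain ⟨m, rfl⟩ : ∃ m, k = m + 1 := ⟨k - 1, by omega⟩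
    rw [hwsucc]; exact hgT _
  have hedge : ∀ k, G.ecol u v' ≤ G.ecol (w k) (w (k+1)) := by
    intro k
    induction k with
    | zero => rw [hw0, hw1]
    | succ n ih =>
      rw [hwsucc (n+1), hwsucc n]
      exact ih.trans (hgE.2 (w n) (w (n+1)) |>.trans_eq (by rw [hwsucc n]))
  have hvmono : Monotone fun k => G.vcol (w k) := by
    apply monotone_nat_of_le_succ
    intro k
    rw [hwsucc]; exact hgE.1 _
  have hvge : ∀ k, 1 ≤ k → G.vcol v' ≤ G.vcol (w k) := by
    intro k hk
    have h1 : G.vcol (w 1) ≤ G.vcol (w k) := hvmono hk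
    rwa [hw1] at h1
  have hne_u : ∀ k, 1 ≤ k → w k ≠ u := by
    intro k hk heq
    have := hvge k hk
    rw [heq] at this
    exact absurd hvlt (not_lt.2 this)
  -- periodicity
  obtain ⟨a, b, hab, heqab⟩ := Finite.exists_ne_map_eq_of_infinite (fun n : ℕ => w (n+1))
  obtain ⟨N, p, hN1, hp1, hNp⟩ : ∃ N p, 1 ≤ N ∧ 1 ≤ p ∧ w (N + p) = w N := by
    rcases hab.lt_or_gt with hl | hl
    · exact ⟨a+1, b - a, by omega, by omega, by
        rw [show a+1+(b-a) = b+1 by omega]; exact heqab.symm⟩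
    · exact ⟨b+1, a - b, by omega, by omega, by
        rw [show b+1+(a-b) = a+1 by omega]; exact heqab⟩
  have hper : ∀ k, N ≤ k → w (k + p) = w k := by
    intro k hk
    obtain ⟨m, rfl⟩ : ∃ m, k = N + m := ⟨k - N, by omega⟩
    calc w (N + m + p) = w (m + (N + p)) := by congr 1; omega
      _ = g^[m] (w (N + p)) := hwadd m (N + p)
      _ = g^[m] (w N) := by rw [hNp]
      _ = w (m + N) := (hwadd m N).symm
      _ = w (N + m) := by congr 1; omega
  have hperiter : ∀ t k, N ≤ k → w (k + t * p) = w k := by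
    intro t
    induction t with
    | zero => intro k _; simp
    | succ n ih =>
      intro k hk
      have h1 : k + (n + 1) * p = (k + n * p) + p := by ring
      rw [h1, hper _ (by omega), ih k hk]
  have hsame : ∀ k l, N ≤ k → k ≤ l → p ∣ (l - k) → w l = w k := by
    intro k l hk hkl hdvd
    obtain ⟨t, ht⟩ := hdvd
    rw [Nat.mul_comm] at ht
    have hl2 : l = k + t * p := by omega
    rw [hl2, hperiter t k hk]
  set d := G.vcol (w N) with hd
  have hlmul : ∀ l : ℕ, l ≤ l * p := fun l => Nat.le_mul_of_pos_right l hp1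
  have hcyclecol : ∀ l, N ≤ l → G.vcol (w l) = d := by
    intro l hl
    have h1 : G.vcol (w N) ≤ G.vcol (w l) := hvmono hl
    have h2 : G.vcol (w l) ≤ G.vcol (w (N + l * p)) := hvmono (by have := hlmul l; omega)
    rw [hperiter l N le_rfl] at h2
    exact le_antisymm h2 h1
  have hiter_pair : ∀ m (a b : W), G.ecol a b ≤ G.ecol (g^[m] a) (g^[m] b) :=
    fun m a b => (endo_iterate G hgE m).2 a b
  have hNpN : N ≤ N * p := hlmul N
  have hNp1 : 1 ≤ N * p := by omega
  have hbotdiv : ∀ k, 1 ≤ k → p ∣ k → G.ecol u (w k) = ⊥ := by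
    intro k hk1 hkp
    have hle : G.ecol u (w k) ≤ G.ecol (g^[N*p] u) (g^[N*p] (w k)) := hiter_pair _ _ _
    have e1 : g^[N*p] u = w (N*p) := rfl
    have e2 : g^[N*p] (w k) = w (N*p + k) := (hwadd _ _).symm
    have e3 : w (N*p + k) = w (N*p) := hsame _ _ hNpN (by omega) (by simpa using hkp)
    rw [e1, e2, e3, G.ecol_irrefl] at hle
    exact le_bot_iff.mp hle
  set c₀ := w (N * p) with hc₀
  have hc₀col : G.vcol c₀ = d := hcyclecol _ hNpN
  have hc₀bot : G.ecol u c₀ = ⊥ := hbotdiv _ hNp1 ⟨N, by ring⟩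
  have hc₀ne : c₀ ≠ u := hne_u _ hNp1
  -- rigidity: every cycle vertex has ⊥ edge to u
  have hcyclebot : ∀ l, N ≤ l → G.ecol u (w l) = ⊥ := by
    intro l hl
    have hl1 : 1 ≤ l := by omega
    obtain ⟨q, hqE, hqT, hqfix, hqc⟩ :=
      ext_single G hMH hend hidem (S := {u, c₀}) (a := c₀) (b := w l)
        (by simp)
        (by
          rintro r hr hrne
          rcases hr with hr | hr
          · rw [hr]; exact huT
          · exact absurd hr hrne)
        (hwT _ hl1)
        (by
          rintro r hr hrne
          rcases hr with hr | hr
          · rw [hr]; exact hne_u _ hl1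
          · exact absurd hr hrne)
        (by rw [hc₀col, hcyclecol _ hl])
        (by
          rintro r hr hrne
          rcases hr with hr | hr
          · rw [hr, hc₀bot]; exact bot_le
          · exact absurd hr hrne)
    have hqu : q u = u := hqfix u (by simp) hc₀ne.symm
    have hinj := hR q hqE hqT hqu
    have hpres := rigid G hqE hqT hinj u huT c₀ (hwT _ hNp1)
    rw [hqu, hqc, hc₀bot] at hpres
    exact hpres
  -- Z and first entry
  set Z : W → Prop := fun t =>
    t ∈ Set.range h ∧ t ≠ u ∧ G.vcol t = d ∧ G.ecol u t = ⊥ with hZdef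
  have hex : ∃ k, 1 ≤ k ∧ Z (w k) :=
    ⟨N * p, hNp1, hwT _ hNp1, hne_u _ hNp1, hc₀col, hc₀bot⟩
  have hspec := Nat.find_spec hex
  set k' := Nat.find hex with hk'
  obtain ⟨hk'1, hZk'⟩ := hspec
  have hnotZ1 : ¬ Z (w 1) := by
    intro hZ1
    rw [hw1] at hZ1
    exact absurd hZ1.2.2.2 (by simpa using hadj.ne')
  have hk'2 : 2 ≤ k' := by
    rcases Nat.lt_or_ge k' 2 with hlt2 | h2
    · exfalso
      have : k' = 1 := by omega
      rw [this] at hZk'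
      exact hnotZ1 hZk'
    · exact h2
  have hs1 : 1 ≤ k' - 1 := by omega
  set s := w (k' - 1) with hs
  have hsnotZ : ¬ Z s := fun hZs => Nat.find_min hex (show k' - 1 < k' by omega) ⟨hs1, hZs⟩
  have hsT : s ∈ Set.range h := hwT _ hs1
  have hsne_u : s ≠ u := hne_u _ hs1
  have hwk'succ : w k' = w ((k'-1)+1) := by congr 1; omega
  have heps_ge : G.ecol u v' ≤ G.ecol s (w k') := by
    rw [hwk'succ]; exact hedge (k'-1)
  have hswk' : s ≠ w k' := fun hh => hsnotZ (hh ▸ hZk')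
  have huwk' : w k' ≠ u := hne_u _ (by omega)
  -- constancy of ecol s · on Z
  have hconst : ∀ t, Z t → G.ecol s t = G.ecol s (w k') := by
    intro t ht
    obtain ⟨htT, htu, htd, htbot⟩ := ht
    by_cases hteq : t = w k'
    · rw [hteq]
    have htns : t ≠ s := fun hh => hsnotZ (hh ▸ (⟨htT, htu, htd, htbot⟩ : Z t))
    rcases le_total (G.ecol s (w k')) (G.ecol s t) with hle | hle
    · obtain ⟨q, hqE, hqT, hqfix, hqc⟩ :=
        ext_single G hMH hend hidem (S := {u, s, w k'}) (a := w k') (b := t)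
          (by simp)
          (by
            rintro r hr hrne
            rcases hr with hr | hr | hr
            · rw [hr]; exact huT
            · rw [hr]; exact hsT
            · exact absurd hr hrne)
          htT
          (by
            rintro r hr hrne
            rcases hr with hr | hr | hr
            · rw [hr]; exact htu
            · rw [hr]; exact htns
            · exact absurd hr hrne)
          (by rw [hZk'.2.2.1, htd])
          (by
            rintro r hr hrne
            rcases hr with hr | hr | hr
            · rw [hr, hZk'.2.2.2]; exact bot_le
            · rw [hr]; exact hle
            · exact absurd hr hrne)
    -- derive equality
      have hqu : q u = u := hqfix u (by simp) huwk'.symm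
      have hqs : q s = s := hqfix s (by simp) hswk'
      have hinj := hR q hqE hqT hqu
      have hpres := rigid G hqE hqT hinj s hsT (w k') (hwT _ (by omega))
      rw [hqs, hqc] at hpres
      exact hpres
    · obtain ⟨q, hqE, hqT, hqfix, hqc⟩ :=
        ext_single G hMH hend hidem (S := {u, s, t}) (a := t) (b := w k')
          (by simp)
          (by
            rintro r hr hrne
            rcases hr with hr | hr | hr
            · rw [hr]; exact huT
            · rw [hr]; exact hsT
            · exact absurd hr hrne)
          (hwT _ (by omega))
          (by
            rintro r hr hrne
            rcases hr with hr | hr | hr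
            · rw [hr]; exact huwk'
            · rw [hr]; exact hswk'.symm
            · exact absurd hr hrne)
          (by rw [hZk'.2.2.1, htd])
          (by
            rintro r hr hrne
            rcases hr with hr | hr | hr
            · rw [hr, htbot]; exact bot_le
            · rw [hr]; exact hle
            · exact absurd hr hrne)
      have hqu : q u = u := hqfix u (by simp) htu.symm
      have hqs : q s = s := hqfix s (by simp) htns.symm
      have hinj := hR q hqE hqT hqu
      have hpres := rigid G hqE hqT hinj s hsT t htT
      rw [hqs, hqc] at hpres
      exact hpres.symm
  -- the blow
  set l := (k' - 1) + N * p with hl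
  have hlN : N ≤ l := by omega
  have hl1 : 1 ≤ l := by omega
  have hZl : Z (w l) := ⟨hwT _ hl1, hne_u _ hl1, hcyclecol _ hlN, hcyclebot _ hlN⟩
  have h1 : G.ecol s (w l) = G.ecol s (w k') := hconst _ hZl
  have h2 : G.ecol s (w l) ≤ G.ecol (g^[N*p] s) (g^[N*p] (w l)) := hiter_pair _ _ _
  have e1 : g^[N*p] s = w (N*p + (k'-1)) := (hwadd _ _).symm
  have e2 : g^[N*p] (w l) = w (N*p + l) := (hwadd _ _).symm
  have e3 : w (N*p + l) = w (N*p + (k'-1)) := by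
    apply hsame _ _ (by omega) (by omega)
    have : (N*p + l) - (N*p + (k'-1)) = N * p := by omega
    rw [this]
    exact ⟨N, by ring⟩
  rw [e1, e2, e3, G.ecol_irrefl] at h2
  have hbot : G.ecol s (w k') = ⊥ := le_bot_iff.mp (h1 ▸ h2)
  rw [hbot] at heps_ge
  exact absurd hadj (by simpa using heps_ge)


lemma engineE (G : LGraph K W) (hMH : G.MH) {h : W → W}
    (hend : G.IsEndo h) (hidem : ∀ v, h (h v) = h v)
    {x y z' : W} (hxy : x ≠ y)
    (hx : h x = x) (hy : h y = y) (hz' : z' ∈ Set.range h)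
    (hR : ∀ q : W → W, G.IsEndo q → (∀ v, q v ∈ Set.range h) → q x = x → q y = y →
      Set.InjOn q (Set.range h))
    (hvyz : G.vcol y ≤ G.vcol z')
    (hlt : G.ecol x y < G.ecol x z') (hadj : ⊥ < G.ecol y z') : False := by
  classical
  have hxT : x ∈ Set.range h := ⟨x, hx⟩
  have hyT : y ∈ Set.range h := ⟨y, hy⟩
  have hbz : ⊥ < G.ecol x z' := lt_of_le_of_lt bot_le hlt
  have hz'x : z' ≠ x := by
    intro hh
    rw [hh, G.ecol_irrefl] at hlt
    exact absurd hlt (not_lt.2 bot_le)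
  -- initial mono: y ↦ z', x fixed
  obtain ⟨g, hgE, hgT, hgfix, hgy⟩ :=
    ext_single G hMH hend hidem (S := {x, y}) (a := y) (b := z')
      (by simp)
      (by
        rintro r hr hrne
        rcases hr with hr | hr
        · rw [hr]; exact hxT
        · exact absurd hr hrne)
      hz'
      (by
        rintro r hr hrne
        rcases hr with hr | hr
        · rw [hr]; exact hz'x
        · exact absurd hr hrne)
      hvyz
      (by
        rintro r hr hrne
        rcases hr with hr | hr
        · rw [hr]; exact hlt.le
        · exact absurd hr hrne)
  have hgx : g x = x := hgfix x (by simp) hxy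
  have hgxit : ∀ m, g^[m] x = x := fun m => Function.iterate_fixed hgx m
  set w : ℕ → W := fun k => g^[k] y with hw
  have hw0 : w 0 = y := rfl
  have hw1 : w 1 = z' := hgy
  have hwsucc : ∀ k, w (k+1) = g (w k) := fun k => Function.iterate_succ_apply' g k y
  have hwadd : ∀ m k, w (m + k) = g^[m] (w k) := fun m k => Function.iterate_add_apply g m k y
  have hwT : ∀ k, 1 ≤ k → w k ∈ Set.range h := by
    intro k hk
    obtain ⟨m, rfl⟩ : ∃ m, k = m + 1 := ⟨k - 1, by omega⟩
    rw [hwsucc]; exact hgT _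
  have hedge : ∀ k, G.ecol y z' ≤ G.ecol (w k) (w (k+1)) := by
    intro k
    induction k with
    | zero => rw [hw0, hw1]
    | succ n ih =>
      rw [hwsucc (n+1), hwsucc n]
      exact ih.trans (hgE.2 (w n) (w (n+1)) |>.trans_eq (by rw [hwsucc n]))
  have hvmono : Monotone fun k => G.vcol (w k) := by
    apply monotone_nat_of_le_succ
    intro k
    rw [hwsucc]; exact hgE.1 _
  have hxmono : Monotone fun k => G.ecol x (w k) := by
    apply monotone_nat_of_le_succ
    intro k
    have h1 : G.ecol x (w k) ≤ G.ecol (g x) (g (w k)) := hgE.2 _ _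
    rwa [hgx, ← hwsucc] at h1
  have hxge : ∀ k, 1 ≤ k → G.ecol x z' ≤ G.ecol x (w k) := by
    intro k hk
    have h1 : G.ecol x (w 1) ≤ G.ecol x (w k) := hxmono hk
    rwa [hw1] at h1
  have hne_x : ∀ k, 1 ≤ k → w k ≠ x := by
    intro k hk heq
    have h1 := (hbz.trans_le (hxge k hk)).ne'
    rw [heq, G.ecol_irrefl] at h1
    exact h1 rfl
  have hne_y : ∀ k, 1 ≤ k → w k ≠ y := by
    intro k hk heq
    have h1 := hlt.trans_le (hxge k hk)
    rw [heq] at h1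
    exact absurd h1 (lt_irrefl _)
  -- periodicity
  obtain ⟨a, b, hab, heqab⟩ := Finite.exists_ne_map_eq_of_infinite (fun n : ℕ => w (n+1))
  obtain ⟨N, p, hN1, hp1, hNp⟩ : ∃ N p, 1 ≤ N ∧ 1 ≤ p ∧ w (N + p) = w N := by
    rcases hab.lt_or_gt with hl | hl
    · exact ⟨a+1, b - a, by omega, by omega, by
        rw [show a+1+(b-a) = b+1 by omega]; exact heqab.symm⟩
    · exact ⟨b+1, a - b, by omega, by omega, by
        rw [show b+1+(a-b) = a+1 by omega]; exact heqab⟩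
  have hper : ∀ k, N ≤ k → w (k + p) = w k := by
    intro k hk
    obtain ⟨m, rfl⟩ : ∃ m, k = N + m := ⟨k - N, by omega⟩
    calc w (N + m + p) = w (m + (N + p)) := by congr 1; omega
      _ = g^[m] (w (N + p)) := hwadd m (N + p)
      _ = g^[m] (w N) := by rw [hNp]
      _ = w (m + N) := (hwadd m N).symm
      _ = w (N + m) := by congr 1; omega
  have hperiter : ∀ t k, N ≤ k → w (k + t * p) = w k := by
    intro t
    induction t with
    | zero => intro k _; simp
    | succ n ih =>
      intro k hk
      have h1 : k + (n + 1) * p = (k + n * p) + p := by ring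
      rw [h1, hper _ (by omega), ih k hk]
  have hsame : ∀ k l, N ≤ k → k ≤ l → p ∣ (l - k) → w l = w k := by
    intro k l hk hkl hdvd
    obtain ⟨t, ht⟩ := hdvd
    rw [Nat.mul_comm] at ht
    have hl2 : l = k + t * p := by omega
    rw [hl2, hperiter t k hk]
  set d := G.vcol (w N) with hd
  set B := G.ecol x (w N) with hB
  have hlmul : ∀ l : ℕ, l ≤ l * p := fun l => Nat.le_mul_of_pos_right l hp1
  have hcyclecol : ∀ l, N ≤ l → G.vcol (w l) = d := by
    intro l hl
    have h1 : G.vcol (w N) ≤ G.vcol (w l) := hvmono hl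
    have h2 : G.vcol (w l) ≤ G.vcol (w (N + l * p)) := hvmono (by have := hlmul l; omega)
    rw [hperiter l N le_rfl] at h2
    exact le_antisymm h2 h1
  have hcycleB : ∀ l, N ≤ l → G.ecol x (w l) = B := by
    intro l hl
    have h1 : G.ecol x (w N) ≤ G.ecol x (w l) := hxmono hl
    have h2 : G.ecol x (w l) ≤ G.ecol x (w (N + l * p)) := hxmono (by have := hlmul l; omega)
    rw [hperiter l N le_rfl] at h2
    exact le_antisymm h2 h1
  have hiter_pair : ∀ m (a b : W), G.ecol a b ≤ G.ecol (g^[m] a) (g^[m] b) :=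
    fun m a b => (endo_iterate G hgE m).2 a b
  have hNpN : N ≤ N * p := hlmul N
  have hNp1 : 1 ≤ N * p := by omega
  have hbotdiv : ∀ k, 1 ≤ k → p ∣ k → G.ecol y (w k) = ⊥ := by
    intro k hk1 hkp
    have hle : G.ecol y (w k) ≤ G.ecol (g^[N*p] y) (g^[N*p] (w k)) := hiter_pair _ _ _
    have e1 : g^[N*p] y = w (N*p) := rfl
    have e2 : g^[N*p] (w k) = w (N*p + k) := (hwadd _ _).symm
    have e3 : w (N*p + k) = w (N*p) := hsame _ _ hNpN (by omega) (by simpa using hkp)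
    rw [e1, e2, e3, G.ecol_irrefl] at hle
    exact le_bot_iff.mp hle
  set c₀ := w (N * p) with hc₀
  have hc₀col : G.vcol c₀ = d := hcyclecol _ hNpN
  have hc₀B : G.ecol x c₀ = B := hcycleB _ hNpN
  have hc₀bot : G.ecol y c₀ = ⊥ := hbotdiv _ hNp1 ⟨N, by ring⟩
  have hc₀nx : c₀ ≠ x := hne_x _ hNp1
  have hc₀ny : c₀ ≠ y := hne_y _ hNp1
  -- rigidity: every cycle vertex has ⊥ edge to y
  have hcyclebot : ∀ l, N ≤ l → G.ecol y (w l) = ⊥ := by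
    intro l hl
    have hl1 : 1 ≤ l := by omega
    obtain ⟨q, hqE, hqT, hqfix, hqc⟩ :=
      ext_single G hMH hend hidem (S := {x, y, c₀}) (a := c₀) (b := w l)
        (by simp)
        (by
          rintro r hr hrne
          rcases hr with hr | hr | hr
          · rw [hr]; exact hxT
          · rw [hr]; exact hyT
          · exact absurd hr hrne)
        (hwT _ hl1)
        (by
          rintro r hr hrne
          rcases hr with hr | hr | hr
          · rw [hr]; exact hne_x _ hl1
          · rw [hr]; exact hne_y _ hl1
          · exact absurd hr hrne)
        (by rw [hc₀col, hcyclecol _ hl])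
        (by
          rintro r hr hrne
          rcases hr with hr | hr | hr
          · rw [hr, hc₀B, hcycleB _ hl]
          · rw [hr, hc₀bot]; exact bot_le
          · exact absurd hr hrne)
    have hqx : q x = x := hqfix x (by simp) hc₀nx.symm
    have hqy : q y = y := hqfix y (by simp) hc₀ny.symm
    have hinj := hR q hqE hqT hqx hqy
    have hpres := rigid G hqE hqT hinj y hyT c₀ (hwT _ hNp1)
    rw [hqy, hqc, hc₀bot] at hpres
    exact hpres
  -- Z and first entry
  set Z : W → Prop := fun t =>
    t ∈ Set.range h ∧ t ≠ x ∧ t ≠ y ∧ G.vcol t = d ∧ G.ecol x t = B ∧ G.ecol y t = ⊥ with hZdef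
  have hex : ∃ k, 1 ≤ k ∧ Z (w k) :=
    ⟨N * p, hNp1, hwT _ hNp1, hc₀nx, hc₀ny, hc₀col, hc₀B, hc₀bot⟩
  have hspec := Nat.find_spec hex
  set k' := Nat.find hex with hk'
  obtain ⟨hk'1, hZk'⟩ := hspec
  have hnotZ1 : ¬ Z (w 1) := by
    intro hZ1
    rw [hw1] at hZ1
    exact absurd hZ1.2.2.2.2.2 (by simpa using hadj.ne')
  have hk'2 : 2 ≤ k' := by
    rcases Nat.lt_or_ge k' 2 with hlt2 | h2
    · exfalso
      have hkk : k' = 1 := by omega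
      rw [hkk] at hZk'
      exact hnotZ1 hZk'
    · exact h2
  have hs1 : 1 ≤ k' - 1 := by omega
  set s := w (k' - 1) with hsdef
  have hsnotZ : ¬ Z s := fun hZs => Nat.find_min hex (show k' - 1 < k' by omega) ⟨hs1, hZs⟩
  have hsT : s ∈ Set.range h := hwT _ hs1
  have hsnx : s ≠ x := hne_x _ hs1
  have hsny : s ≠ y := hne_y _ hs1
  have hwk'succ : w k' = w ((k'-1)+1) := by congr 1; omega
  have heps_ge : G.ecol y z' ≤ G.ecol s (w k') := by
    rw [hwk'succ]; exact hedge (k'-1)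
  have hswk' : s ≠ w k' := fun hh => hsnotZ (hh ▸ hZk')
  have hxwk' : w k' ≠ x := hne_x _ (by omega)
  have hywk' : w k' ≠ y := hne_y _ (by omega)
  -- constancy of ecol s · on Z
  have hconst : ∀ t, Z t → G.ecol s t = G.ecol s (w k') := by
    intro t ht
    obtain ⟨htT, htx, hty, htd, htB, htbot⟩ := ht
    by_cases hteq : t = w k'
    · rw [hteq]
    have htns : t ≠ s := fun hh => hsnotZ (hh ▸ (⟨htT, htx, hty, htd, htB, htbot⟩ : Z t))
    rcases le_total (G.ecol s (w k')) (G.ecol s t) with hle | hle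
    · obtain ⟨q, hqE, hqT, hqfix, hqc⟩ :=
        ext_single G hMH hend hidem (S := {x, y, s, w k'}) (a := w k') (b := t)
          (by simp)
          (by
            rintro r hr hrne
            rcases hr with hr | hr | hr | hr
            · rw [hr]; exact hxT
            · rw [hr]; exact hyT
            · rw [hr]; exact hsT
            · exact absurd hr hrne)
          htT
          (by
            rintro r hr hrne
            rcases hr with hr | hr | hr | hr
            · rw [hr]; exact htx
            · rw [hr]; exact hty
            · rw [hr]; exact htns
            · exact absurd hr hrne)
          (by rw [hZk'.2.2.2.1, htd])
          (by
            rintro r hr hrne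
            rcases hr with hr | hr | hr | hr
            · rw [hr, hZk'.2.2.2.2.1, htB]
            · rw [hr, hZk'.2.2.2.2.2]; exact bot_le
            · rw [hr]; exact hle
            · exact absurd hr hrne)
      have hqx : q x = x := hqfix x (by simp) hxwk'.symm
      have hqy : q y = y := hqfix y (by simp) hywk'.symm
      have hqs : q s = s := hqfix s (by simp) hswk'
      have hinj := hR q hqE hqT hqx hqy
      have hpres := rigid G hqE hqT hinj s hsT (w k') (hwT _ (by omega))
      rw [hqs, hqc] at hpres
      exact hpres
    · obtain ⟨q, hqE, hqT, hqfix, hqc⟩ :=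
        ext_single G hMH hend hidem (S := {x, y, s, t}) (a := t) (b := w k')
          (by simp)
          (by
            rintro r hr hrne
            rcases hr with hr | hr | hr | hr
            · rw [hr]; exact hxT
            · rw [hr]; exact hyT
            · rw [hr]; exact hsT
            · exact absurd hr hrne)
          (hwT _ (by omega))
          (by
            rintro r hr hrne
            rcases hr with hr | hr | hr | hr
            · rw [hr]; exact hxwk'
            · rw [hr]; exact hywk'
            · rw [hr]; exact hswk'.symm
            · exact absurd hr hrne)
          (by rw [hZk'.2.2.2.1, htd])
          (by
            rintro r hr hrne
            rcases hr with hr | hr | hr | hr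
            · rw [hr, htB, hZk'.2.2.2.2.1]
            · rw [hr, htbot]; exact bot_le
            · rw [hr]; exact hle
            · exact absurd hr hrne)
      have hqx : q x = x := hqfix x (by simp) htx.symm
      have hqy : q y = y := hqfix y (by simp) hty.symm
      have hqs : q s = s := hqfix s (by simp) htns.symm
      have hinj := hR q hqE hqT hqx hqy
      have hpres := rigid G hqE hqT hinj s hsT t htT
      rw [hqs, hqc] at hpres
      exact hpres.symm
  -- the blow
  set l := (k' - 1) + N * p with hldef
  have hlN : N ≤ l := by omega
  have hl1 : 1 ≤ l := by omega
  have hZl : Z (w l) :=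
    ⟨hwT _ hl1, hne_x _ hl1, hne_y _ hl1, hcyclecol _ hlN, hcycleB _ hlN, hcyclebot _ hlN⟩
  have h1 : G.ecol s (w l) = G.ecol s (w k') := hconst _ hZl
  have h2 : G.ecol s (w l) ≤ G.ecol (g^[N*p] s) (g^[N*p] (w l)) := hiter_pair _ _ _
  have e1 : g^[N*p] s = w (N*p + (k'-1)) := (hwadd _ _).symm
  have e2 : g^[N*p] (w l) = w (N*p + l) := (hwadd _ _).symm
  have e3 : w (N*p + l) = w (N*p + (k'-1)) := by
    apply hsame _ _ (by omega) (by omega)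
    have hdiff : (N*p + l) - (N*p + (k'-1)) = N * p := by omega
    rw [hdiff]
    exact ⟨N, by ring⟩
  rw [e1, e2, e3, G.ecol_irrefl] at h2
  have hbot : G.ecol s (w k') = ⊥ := le_bot_iff.mp (h1 ▸ h2)
  rw [hbot] at heps_ge
  exact absurd hadj (by simpa using heps_ge)


lemma refV (G : LGraph K W) (hMH : G.MH) {u v : W}
    (hadj : ⊥ < G.ecol u v) (hlt : G.vcol u < G.vcol v) : False := by
  obtain ⟨h, hE, hF, hI, hR⟩ := exists_min_retract G {u}
  have hu : h u = u := hF u rfl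
  refine engineV G hMH hE hI hu ⟨v, rfl⟩ ?_ ?_ ?_
  · intro q hq hqT hqu
    exact hR q hq hqT (by simpa using hqu)
  · exact hlt.trans_le (hE.1 v)
  · refine hadj.trans_le ?_
    have h1 := hE.2 u v
    rwa [hu] at h1

lemma refE (G : LGraph K W) (hMH : G.MH) {x y z : W} (hxy : x ≠ y)
    (h1 : ⊥ < G.ecol x z) (h2 : ⊥ < G.ecol y z)
    (hyz : G.vcol y ≤ G.vcol z) (hlt : G.ecol x y < G.ecol x z) : False := by
  obtain ⟨h, hE, hF, hI, hR⟩ := exists_min_retract G {x, y}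
  have hx : h x = x := hF x (by simp)
  have hy : h y = y := hF y (by simp)
  refine engineE G hMH hE hI hxy hx hy ⟨z, rfl⟩ ?_ ?_ ?_ ?_
  · intro q hq hqT hqx hqy
    refine hR q hq hqT ?_
    rintro pp hpp
    rcases hpp with hpp | hpp
    · rw [hpp]; exact hqx
    · rw [show pp = y from hpp]; exact hqy
  · refine hyz.trans ?_
    exact hE.1 z
  · refine hlt.trans_le ?_
    have he := hE.2 x z
    rwa [hx] at he
  · refine h2.trans_le ?_
    have he := hE.2 y z
    rwa [hy] at he

end StmtAux

end StmtAuxSec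

/-- Lemma 2(a). -/
theorem stmt1 {L V : Type*} [LinearOrder L] [BoundedOrder L] [Finite V]
    (G : LGraph L V) (hMH : G.MH)
    (x y z : V) (hxy : x ≠ y) (hxz : x ≠ z) (hyz : y ≠ z)
    (h1 : ⊥ < G.ecol x z) (h2 : ⊥ < G.ecol y z) :
    G.ecol x y < G.ecol x z ↔ G.vcol z < G.vcol y := by
  have hVfalse : ¬ (G.vcol z < G.vcol y) := by
    intro hzy
    refine StmtAux.refV G hMH (u := z) (v := y) ?_ hzy
    rwa [G.ecol_symm z y]
  have hEfalse : ¬ (G.ecol x y < G.ecol x z) := by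
    intro hlt
    exact StmtAux.refE G hMH hxy h1 h2 (not_lt.1 hVfalse) hlt
  exact iff_of_false hEfalse hVfalse
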